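/- Let ω_0, …, ω_{P−1} ∈ ℝ, T_S > 0, a_p = exp(−i ω_p T_S), and let Ψ_{Ω_C}^N be the N-fold convolution power of Ψ_{Ω_C} = ψ_0 ∗ ⋯ ∗ ψ_{P−1}. Then for every integer N ≥ 1 and every 0 ≤ k ≤ NP, Ψ_{Ω_C}^N[k] = (−1)^{NP−k} · ∑_{v ∈ 𝒱(N,k)} ∏_{i=0}^{N−1} e_{v_i}(a_0, …, a_{P−1}), where 𝒱(N,k) is the set of all vectors v ∈ ℕ^N of non-negative integers with ∑_{i} v_i = k, and e_j denotes the elementary symmetric polynomial of degree j (with e_j = 0 for j > P). -/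

import Mathlib

noncomputable section

open scoped BigOperators

/-- Kronecker delta sequence. -/
def delta : ℤ → ℂ := fun k => if k = 0 then 1 else 0

/-- Discrete convolution of sequences: `(a ∗ b)[k] = ∑ₙ a[n]·b[k−n]`. -/
def conv (a b : ℤ → ℂ) : ℤ → ℂ := fun k => ∑' n : ℤ, a n * b (k - n)

/-- `N`-fold convolution power (`convPow a 0` is the unit `delta`). -/
def convPow (a : ℤ → ℂ) : ℕ → ℤ → ℂ
  | 0 => delta
  | n + 1 => conv a (convPow a n)

/-- Two-tap modulated filter `ψ = [-1, exp(-i ω T)]`. -/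
def psi (w T : ℝ) : ℤ → ℂ := fun k =>
  if k = 0 then -1 else if k = 1 then Complex.exp (-(Complex.I * (w : ℂ) * (T : ℂ))) else 0

/-- Multiband filter `Ψ = ψ₀ ∗ ψ₁ ∗ ⋯` over a list of frequencies. -/
def PsiL (ws : List ℝ) (T : ℝ) : ℤ → ℂ :=
  (ws.map fun w => psi w T).foldr conv delta

/-- First difference filter `Δ = [-1, 1]`. -/
def Delta : ℤ → ℂ := fun k => if k = 0 then -1 else if k = 1 then 1 else 0

/-- Fourier transform in angular frequency: `f̂(ω) = ∫ exp(-i ω t) f(t) dt`. -/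
def angFourier (f : ℝ → ℂ) (w : ℝ) : ℂ :=
  ∫ t : ℝ, Complex.exp (-(Complex.I * (w : ℂ) * (t : ℂ))) * f t

/-- Centered modulo `M_λ : ℝ → [-λ, λ)`. -/
def mod1 (lam t : ℝ) : ℝ := t - 2 * lam * (⌊(t + lam) / (2 * lam)⌋ : ℝ)

/-- Centered modulo on ℂ, applied componentwise. -/
def cmod (lam : ℝ) (z : ℂ) : ℂ := (mod1 lam z.re : ℂ) + (mod1 lam z.im : ℂ) * Complex.I

/-- Elementary symmetric polynomial of degree `k` in variables `z 0, …, z (P-1)`. -/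
def esymmC {P : ℕ} (z : Fin P → ℂ) (k : ℕ) : ℂ :=
  ∑ S ∈ Finset.univ.powersetCard k, ∏ i ∈ S, z i

section AuxPsiPow

open Polynomial

def toSeq (p : Polynomial ℂ) : ℤ → ℂ := fun k => if 0 ≤ k then p.coeff k.toNat else 0

lemma conv_toSeq (p q : Polynomial ℂ) : conv (toSeq p) (toSeq q) = toSeq (p * q) := by
  funext k
  unfold conv toSeq
  rcases le_or_gt 0 k with hk | hk
  · rw [if_pos hk]
    rw [tsum_eq_sum (s := Finset.Icc 0 k)
      (by
        intro n hn
        rw [Finset.mem_Icc] at hn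
        rcases lt_or_ge n 0 with h | h
        · rw [if_neg (not_le.mpr h), zero_mul]
        · have : ¬ ((0:ℤ) ≤ k - n) := by omega
          rw [if_neg this, mul_zero])]
    rw [Polynomial.coeff_mul, Finset.Nat.sum_antidiagonal_eq_sum_range_succ_mk]
    refine (Finset.sum_nbij' (i := fun n => n.toNat) (j := fun j => (j : ℤ)) ?_ ?_ ?_ ?_ ?_)
    · intro n hn; rw [Finset.mem_Icc] at hn; rw [Finset.mem_range]; omega
    · intro j hj; rw [Finset.mem_range] at hj; rw [Finset.mem_Icc]; omega
    · intro n hn; rw [Finset.mem_Icc] at hn; omega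
    · intro j hj; simp
    · intro n hn
      dsimp only
      rw [Finset.mem_Icc] at hn
      rw [if_pos hn.1, if_pos (by omega : (0:ℤ) ≤ k - n)]
      congr 2
      omega
  · rw [if_neg (not_le.mpr hk)]
    rw [tsum_congr (g := fun _ => (0:ℂ)) (fun n => by
      rcases lt_or_ge n 0 with h | h
      · rw [if_neg (not_le.mpr h), zero_mul]
      · rw [if_neg (by omega : ¬ ((0:ℤ) ≤ k - n)), mul_zero]), tsum_zero]

lemma delta_eq : delta = toSeq 1 := by
  funext k
  unfold delta toSeq
  rcases le_or_gt 0 k with hk | hk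
  · rw [if_pos hk, Polynomial.coeff_one]
    by_cases h : k = 0
    · rw [if_pos h, if_pos (by omega)]
    · rw [if_neg h, if_neg (by omega)]
  · rw [if_neg (by omega), if_neg (not_le.mpr hk)]

lemma psi_eq (w T : ℝ) :
    psi w T = toSeq (C (Complex.exp (-(Complex.I * (w : ℂ) * (T : ℂ)))) * X - 1) := by
  funext k
  unfold psi toSeq
  rcases le_or_gt 0 k with hk | hk
  · rw [if_pos hk]
    simp only [Polynomial.coeff_sub, Polynomial.coeff_C_mul, Polynomial.coeff_X,
      Polynomial.coeff_one]
    by_cases h0 : k = 0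
    · subst h0; norm_num
    · by_cases h1 : k = 1
      · subst h1; norm_num
      · rw [if_neg h0, if_neg h1, if_neg (by omega), if_neg (by omega)]
        ring
  · rw [if_neg (by omega), if_neg (by omega), if_neg (not_le.mpr hk)]

lemma convPow_toSeq (p : Polynomial ℂ) (N : ℕ) : convPow (toSeq p) N = toSeq (p ^ N) := by
  induction N with
  | zero => rw [pow_zero]; exact delta_eq
  | succ n ih =>
    show conv (toSeq p) (convPow (toSeq p) n) = _
    rw [ih, conv_toSeq, ← pow_succ']

lemma PsiL_eq (l : List ℝ) (T : ℝ) :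
    PsiL l T = toSeq ((l.map fun w : ℝ =>
      C (Complex.exp (-(Complex.I * (w : ℂ) * (T : ℂ)))) * X - 1).prod) := by
  unfold PsiL
  induction l with
  | nil => simpa using delta_eq
  | cons w l ih =>
    simp only [List.map_cons, List.foldr_cons, List.prod_cons]
    rw [ih, psi_eq, conv_toSeq]

/-- Elementary symmetric recursion via coefficient of products of linear factors. -/
lemma coeff_prod_lin {ι : Type*} [DecidableEq ι] (s : Finset ι) (z : ι → ℂ) (k : ℕ) :
    (∏ i ∈ s, (C (z i) * X - 1)).coeff k
      = (-1) ^ (s.card + k) * ∑ S ∈ s.powersetCard k, ∏ i ∈ S, z i := by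
  induction s using Finset.induction_on generalizing k with
  | empty =>
    rw [Finset.prod_empty, Polynomial.coeff_one, Finset.card_empty]
    cases k with
    | zero => simp
    | succ n =>
      rw [if_neg (by omega), Finset.powersetCard_eq_empty.mpr (by simp)]
      simp
  | @insert a s ha ih =>
    rw [Finset.prod_insert ha, Finset.card_insert_of_notMem ha]
    have hQ : (C (z a) * X - 1) * (∏ i ∈ s, (C (z i) * X - 1))
        = C (z a) * (X * ∏ i ∈ s, (C (z i) * X - 1)) - ∏ i ∈ s, (C (z i) * X - 1) := by ring
    rw [hQ, Polynomial.coeff_sub, Polynomial.coeff_C_mul]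
    cases k with
    | zero =>
      rw [Polynomial.coeff_X_mul_zero, mul_zero, zero_sub, ih 0]
      simp [Finset.powersetCard_zero, pow_succ]
    | succ n =>
      rw [Polynomial.coeff_X_mul, ih n, ih (n + 1),
        Finset.powersetCard_succ_insert ha]
      have hdisj : Disjoint (s.powersetCard (n + 1))
          ((s.powersetCard n).image (insert a)) := by
        rw [Finset.disjoint_left]
        intro S hS hS'
        obtain ⟨U, hU, rfl⟩ := Finset.mem_image.mp hS'
        exact ha ((Finset.mem_powersetCard.mp hS).1 (Finset.mem_insert_self a U))
      rw [Finset.sum_union hdisj]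
      rw [Finset.sum_image (by
        intro x hx y hy h
        have hax : a ∉ x := fun c => ha ((Finset.mem_powersetCard.mp hx).1 c)
        have hay : a ∉ y := fun c => ha ((Finset.mem_powersetCard.mp hy).1 c)
        rw [← Finset.erase_insert hax, h, Finset.erase_insert hay])]
      have hins : ∑ S ∈ s.powersetCard n, ∏ i ∈ insert a S, z i
          = z a * ∑ S ∈ s.powersetCard n, ∏ i ∈ S, z i := by
        rw [Finset.mul_sum]
        refine Finset.sum_congr rfl fun S hS => ?_
        have haS : a ∉ S := fun c => ha ((Finset.mem_powersetCard.mp hS).1 c)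
        rw [Finset.prod_insert haS]
      rw [hins]
      simp only [pow_add, pow_succ]
      ring


lemma coeff_pow_tuple (p : Polynomial ℂ) (N : ℕ) : ∀ k : ℕ,
    (p ^ N).coeff k = ∑ v ∈ Finset.Nat.antidiagonalTuple N k, ∏ i, p.coeff (v i) := by
  induction N with
  | zero =>
    intro k
    cases k with
    | zero => simp
    | succ n => simp [Finset.Nat.antidiagonalTuple_zero_succ, Polynomial.coeff_one]
  | succ n ih =>
    intro k
    rw [pow_succ', Polynomial.coeff_mul]
    rw [Finset.sum_congr rfl (fun ab _ => by
      rw [ih ab.2, Finset.mul_sum] :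
      ∀ ab ∈ Finset.HasAntidiagonal.antidiagonal k, p.coeff ab.1 * (p ^ n).coeff ab.2
        = ∑ v ∈ Finset.Nat.antidiagonalTuple n ab.2, p.coeff ab.1 * ∏ i, p.coeff (v i)),
      Finset.sum_sigma']
    refine Finset.sum_nbij' (i := fun x => Fin.cons x.1.1 x.2)
      (j := fun w => ⟨(w 0, ∑ i, Fin.tail w i), Fin.tail w⟩) ?_ ?_ ?_ ?_ ?_
    · rintro ⟨⟨a, b⟩, v⟩ hx
      rw [Finset.mem_sigma] at hx
      have h1 := Finset.HasAntidiagonal.mem_antidiagonal.mp hx.1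
      have h2 := Finset.Nat.mem_antidiagonalTuple.mp hx.2
      rw [Finset.Nat.mem_antidiagonalTuple]
      dsimp only at *
      rw [Fin.sum_cons, h2, h1]
    · intro w hw
      rw [Finset.Nat.mem_antidiagonalTuple] at hw
      rw [Finset.mem_sigma]
      constructor
      · rw [Finset.HasAntidiagonal.mem_antidiagonal]
        dsimp only
        rw [← hw, Fin.sum_univ_succ]
        rfl
      · rw [Finset.Nat.mem_antidiagonalTuple]
    · rintro ⟨⟨a, b⟩, v⟩ hx
      rw [Finset.mem_sigma] at hx
      have h2 := Finset.Nat.mem_antidiagonalTuple.mp hx.2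
      dsimp only at *
      simp [Fin.tail_cons, h2]
    · intro w hw
      dsimp only
      exact Fin.cons_self_tail w
    · rintro ⟨⟨a, b⟩, v⟩ hx
      dsimp only
      rw [Fin.prod_univ_succ]
      simp [Fin.cons_zero, Fin.cons_succ]


end AuxPsiPow

/-- The taps of the `N`-th power filter `Ψ_{Ω_C}^N` are signed sums over all
compositions `v ∈ 𝒱(N,k)` of products of elementary symmetric polynomials in
`a_p = exp(-i ω_p T)`. -/
theorem Psi_pow_taps {P : ℕ} (ω : Fin P → ℝ) (T : ℝ) (hT : 0 < T)
    (N : ℕ) (hN : 1 ≤ N) (k : ℕ) (hk : k ≤ N * P) :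
    convPow (PsiL (List.ofFn ω) T) N (k : ℤ) =
      (-1) ^ (N * P - k) *
        ∑ v ∈ Finset.Nat.antidiagonalTuple N k, ∏ i : Fin N,
          esymmC (fun p => Complex.exp (-(Complex.I * (ω p : ℂ) * (T : ℂ)))) (v i) := by
  have key := PsiL_eq (List.ofFn ω) T
  rw [List.map_ofFn, List.prod_ofFn] at key
  simp only [Function.comp_apply] at key
  rw [key, convPow_toSeq]
  set a : Fin P → ℂ := fun p => Complex.exp (-(Complex.I * (ω p : ℂ) * (T : ℂ))) with ha
  show (if (0:ℤ) ≤ (k:ℤ) then _ else 0) = _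
  rw [if_pos (Int.natCast_nonneg k), Int.toNat_natCast, coeff_pow_tuple]
  have step : ∀ v ∈ Finset.Nat.antidiagonalTuple N k,
      (∏ i : Fin N, (∏ p : Fin P, (Polynomial.C (a p) * Polynomial.X - 1)).coeff (v i))
        = (-1 : ℂ) ^ (N * P + k) * ∏ i : Fin N, esymmC a (v i) := by
    intro v hv
    have hv' : ∑ i, v i = k := Finset.Nat.mem_antidiagonalTuple.mp hv
    have h1 : ∀ i : Fin N, (∏ p : Fin P, (Polynomial.C (a p) * Polynomial.X - 1)).coeff (v i)
        = (-1 : ℂ) ^ (P + v i) * esymmC a (v i) := by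
      intro i
      rw [coeff_prod_lin Finset.univ a (v i), Finset.card_univ, Fintype.card_fin]
      rfl
    rw [Finset.prod_congr rfl fun i _ => h1 i, Finset.prod_mul_distrib,
      Finset.prod_pow_eq_pow_sum]
    congr 2
    rw [Finset.sum_add_distrib, hv', Finset.sum_const, Finset.card_univ, Fintype.card_fin,
      smul_eq_mul]
  rw [Finset.sum_congr rfl step, ← Finset.mul_sum]
  congr 1
  rw [show N * P + k = (N * P - k) + 2 * k by omega, pow_add, pow_mul]
  norm_num

end
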